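/- Let 0<q₁<1 and 0<q₂<1, let β,δ>0, μ,ν>0 and η,ζ>−1 be real parameters, let f,g,h : [0,∞)→ℝ be continuous pairwise synchronous functions on [0,∞) with h nonnegative, and let u,v : [0,∞)→[0,∞) be continuous. Then for all t>0: I_{q₂}^{ζ,ν,δ}{v·f·g·h}(t)·I_{q₁}^{η,μ,β}{u}(t) + I_{q₂}^{ζ,ν,δ}{v·f·g}(t)·I_{q₁}^{η,μ,β}{u·h}(t) + I_{q₂}^{ζ,ν,δ}{v·h}(t)·I_{q₁}^{η,μ,β}{u·f·g}(t) + I_{q₂}^{ζ,ν,δ}{v}(t)·I_{q₁}^{η,μ,β}{u·f·g·h}(t) ≥ I_{q₂}^{ζ,ν,δ}{v·g·h}(t)·I_{q₁}^{η,μ,β}{u·f}(t) + I_{q₂}^{ζ,ν,δ}{v·f·h}(t)·I_{q₁}^{η,μ,β}{u·g}(t) + I_{q₂}^{ζ,ν,δ}{v·f}(t)·I_{q₁}^{η,μ,β}{u·g·h}(t) + I_{q₂}^{ζ,ν,δ}{v·g}(t)·I_{q₁}^{η,μ,β}{u·f·h}(t). -/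

import Mathlib

open scoped BigOperators

/-- The q-shifted factorial (a;q)_k = prod_{j<k} (1 - a q^j). -/
noncomputable def qPoch (q a : ℝ) (k : ℕ) : ℝ :=
  ∏ j ∈ Finset.range k, (1 - a * q ^ j)

/-- Generalized Erdélyi–Kober fractional q-integral
    I_q^{η,μ,β}{f}(t) = β(1-q^{1/β})(1-q)^{μ-1} ∑_k ((q^μ;q)_k/(q;q)_k) q^{k(η+1)} f(t q^{k/β}). -/
noncomputable def EK (q η μ β : ℝ) (f : ℝ → ℝ) (t : ℝ) : ℝ :=
  β * (1 - q ^ (1 / β)) * (1 - q) ^ (μ - 1) *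
    ∑' k : ℕ, qPoch q (q ^ μ) k / qPoch q q k * q ^ ((k : ℝ) * (η + 1)) * f (t * q ^ ((k : ℝ) / β))

def Synchronous (f g : ℝ → ℝ) : Prop :=
  ∀ x y : ℝ, 0 ≤ x → 0 ≤ y → 0 ≤ (f x - f y) * (g x - g y)

def Asynchronous (f g : ℝ → ℝ) : Prop :=
  ∀ x y : ℝ, 0 ≤ x → 0 ≤ y → (f x - f y) * (g x - g y) ≤ 0

noncomputable def wgt (q η μ : ℝ) (k : ℕ) : ℝ :=
  qPoch q (q ^ μ) k / qPoch q q k * q ^ ((k : ℝ) * (η + 1))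

lemma qPoch_pos {q a : ℝ} (hq0 : 0 ≤ q) (hq1 : q ≤ 1) (ha0 : 0 ≤ a) (ha1 : a < 1) (k : ℕ) :
    0 < qPoch q a k := by
  apply Finset.prod_pos
  intro j _
  have h1 : q ^ j ≤ 1 := pow_le_one₀ hq0 hq1
  have h2 : a * q ^ j ≤ a := by
    calc a * q ^ j ≤ a * 1 := by
          exact mul_le_mul_of_nonneg_left h1 ha0
      _ = a := mul_one a
  linarith

lemma wgt_pos {q η μ : ℝ} (hq : 0 < q) (hq' : q < 1) (hμ : 0 < μ) (k : ℕ) :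
    0 < wgt q η μ k := by
  have h1 : (0:ℝ) ≤ q ^ μ := (Real.rpow_pos_of_pos hq μ).le
  have h2 : q ^ μ < 1 := Real.rpow_lt_one hq.le hq' hμ
  exact mul_pos (div_pos (qPoch_pos hq.le hq'.le h1 h2 k)
    (qPoch_pos hq.le hq'.le hq.le hq' k)) (Real.rpow_pos_of_pos hq _)

lemma ratio_step {P Q B n d rho r : ℝ} (hP : 0 < P) (hQ : 0 < Q) (hB : 0 < B)
    (hd : 0 < d) (hkey : n * rho ≤ r * d) :
    P * n / (Q * d) * (B * rho) ≤ r * (P / Q * B) := by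
  rw [div_mul_eq_mul_div, div_le_iff₀ (by positivity)]
  have h2 : r * (P / Q * B) * (Q * d) = r * d * (P * B) := by
    field_simp
  rw [h2]
  nlinarith [mul_le_mul_of_nonneg_right hkey (mul_pos hP hB).le]

lemma wgt_summable {q η μ : ℝ} (hq : 0 < q) (hq' : q < 1) (hμ : 0 < μ) (hη : -1 < η) :
    Summable (wgt q η μ) := by
  set ρ := q ^ (η + 1) with hρdef
  have hρ0 : 0 < ρ := Real.rpow_pos_of_pos hq _
  have hρ1 : ρ < 1 := Real.rpow_lt_one hq.le hq' (by linarith)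
  set r := (1 + ρ) / 2 with hrdef
  have hρr : ρ < r := by rw [hrdef]; linarith
  have hr0 : 0 < r := lt_trans hρ0 hρr
  have hr1 : r < 1 := by rw [hrdef]; linarith
  have hc : 0 < 1 - ρ / r := by
    have : ρ / r < 1 := (div_lt_one hr0).2 hρr
    linarith
  have hev : ∀ᶠ k : ℕ in Filter.atTop, q ^ k < 1 - ρ / r :=
    (tendsto_pow_atTop_nhds_zero_of_lt_one hq.le hq').eventually_lt_const hc
  apply summable_of_ratio_norm_eventually_le hr1
  filter_upwards [hev] with k hk
  have hwpos := wgt_pos hq hq' hμ (η := η) k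
  have hwpos' := wgt_pos hq hq' hμ (η := η) (k + 1)
  rw [Real.norm_of_nonneg hwpos'.le, Real.norm_of_nonneg hwpos.le]
  have hqμ0 : (0:ℝ) < q ^ μ := Real.rpow_pos_of_pos hq μ
  have hqμ1 : q ^ μ < 1 := Real.rpow_lt_one hq.le hq' hμ
  have hP := qPoch_pos hq.le hq'.le hqμ0.le hqμ1 k
  have hQ := qPoch_pos hq.le hq'.le hq.le hq' k
  have hQ' := qPoch_pos hq.le hq'.le hq.le hq' (k + 1)
  have hB : (0:ℝ) < q ^ ((k:ℝ) * (η + 1)) := Real.rpow_pos_of_pos hq _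
  -- key scalar inequality
  have hqk : (0:ℝ) < q ^ k := pow_pos hq k
  have h1k : q * q ^ k ≤ q ^ k := by nlinarith
  have hd : ρ < r * (1 - q * q ^ k) := by
    have h1 : ρ / r < 1 - q ^ k := by linarith
    have h2 : ρ < (1 - q ^ k) * r := (div_lt_iff₀ hr0).mp h1
    nlinarith
  have hn1 : q ^ μ * q ^ k ≥ 0 := by positivity
  have hnd : (1 - q ^ μ * q ^ k) * ρ ≤ r * (1 - q * q ^ k) := by nlinarith
  -- unfold the recursion
  unfold wgt qPoch
  rw [Finset.prod_range_succ, Finset.prod_range_succ]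
  have hexp : ((k + 1 : ℕ) : ℝ) * (η + 1) = (k : ℝ) * (η + 1) + (η + 1) := by
    push_cast; ring
  rw [hexp, Real.rpow_add hq]
  have hρr0 : 0 < ρ / r := by positivity
  have hd0 : (0:ℝ) < 1 - q * q ^ k := by nlinarith
  unfold qPoch at hP hQ
  exact ratio_step hP hQ hB hd0 hnd

lemma summable_EKterm {q η μ β : ℝ} (hq : 0 < q) (hq' : q < 1) (hμ : 0 < μ)
    (hη : -1 < η) (hβ : 0 < β) {t : ℝ} (ht : 0 < t)
    {φ : ℝ → ℝ} (hφ : ContinuousOn φ (Set.Ici 0)) :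
    Summable (fun k : ℕ => wgt q η μ k * φ (t * q ^ ((k : ℝ) / β))) := by
  obtain ⟨M, hM⟩ := (isCompact_Icc (a := (0:ℝ)) (b := t)).exists_bound_of_continuousOn
    (hφ.mono (fun s hs => hs.1))
  have hx : ∀ k : ℕ, t * q ^ ((k : ℝ) / β) ∈ Set.Icc (0:ℝ) t := by
    intro k
    constructor
    · positivity
    · have h1 : q ^ ((k : ℝ) / β) ≤ 1 := Real.rpow_le_one hq.le hq'.le (by positivity)
      nlinarith
  apply Summable.of_norm_bounded (g := fun k => wgt q η μ k * M)
    ((wgt_summable hq hq' hμ hη).mul_right M)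
  intro k
  rw [norm_mul, Real.norm_of_nonneg (wgt_pos hq hq' hμ k).le]
  exact mul_le_mul_of_nonneg_left (hM _ (hx k)) (wgt_pos hq hq' hμ k).le

lemma inner_ineq (w : ℕ → ℝ) (x : ℕ → ℝ) (f g h u : ℝ → ℝ) (p s r : ℝ)
    (hw : ∀ k, 0 ≤ w k) (hu : ∀ k, 0 ≤ u (x k))
    (hsync : ∀ k, 0 ≤ (f (x k) - p) * (g (x k) - s))
    (hh : ∀ k, 0 ≤ h (x k)) (hr : 0 ≤ r)
    (sU : Summable (fun k => w k * u (x k)))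
    (sUF : Summable (fun k => w k * (u (x k) * f (x k))))
    (sUG : Summable (fun k => w k * (u (x k) * g (x k))))
    (sUH : Summable (fun k => w k * (u (x k) * h (x k))))
    (sUFG : Summable (fun k => w k * (u (x k) * f (x k) * g (x k))))
    (sUFH : Summable (fun k => w k * (u (x k) * f (x k) * h (x k))))
    (sUGH : Summable (fun k => w k * (u (x k) * g (x k) * h (x k))))
    (sUFGH : Summable (fun k => w k * (u (x k) * f (x k) * g (x k) * h (x k)))) :
    s * r * (∑' k, w k * (u (x k) * f (x k))) + p * r * (∑' k, w k * (u (x k) * g (x k))) +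
      p * (∑' k, w k * (u (x k) * g (x k) * h (x k))) +
      s * (∑' k, w k * (u (x k) * f (x k) * h (x k)))
    ≤ p * s * r * (∑' k, w k * u (x k)) + p * s * (∑' k, w k * (u (x k) * h (x k))) +
      r * (∑' k, w k * (u (x k) * f (x k) * g (x k))) +
      (∑' k, w k * (u (x k) * f (x k) * g (x k) * h (x k))) := by
  rw [← sub_nonneg]
  have hA : Summable (fun k => w k * (u (x k) * f (x k) * g (x k) * h (x k)) +
      (r * (w k * (u (x k) * f (x k) * g (x k))) +
        (p * s * (w k * (u (x k) * h (x k))) + p * s * r * (w k * u (x k))))) :=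
    sUFGH.add ((sUFG.mul_left r).add ((sUH.mul_left (p * s)).add (sU.mul_left (p * s * r))))
  have hB : Summable (fun k => s * r * (w k * (u (x k) * f (x k))) +
      (p * r * (w k * (u (x k) * g (x k))) +
        (p * (w k * (u (x k) * g (x k) * h (x k))) + s * (w k * (u (x k) * f (x k) * h (x k)))))) :=
    (sUF.mul_left (s * r)).add ((sUG.mul_left (p * r)).add
      ((sUGH.mul_left p).add (sUFH.mul_left s)))
  have e1 : (∑' k, w k * u (x k) * ((f (x k) - p) * (g (x k) - s) * (h (x k) + r)))
      = ((∑' k, w k * (u (x k) * f (x k) * g (x k) * h (x k))) +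
          (r * (∑' k, w k * (u (x k) * f (x k) * g (x k))) +
            (p * s * (∑' k, w k * (u (x k) * h (x k))) + p * s * r * (∑' k, w k * u (x k))))) -
        (s * r * (∑' k, w k * (u (x k) * f (x k))) +
          (p * r * (∑' k, w k * (u (x k) * g (x k))) +
            (p * (∑' k, w k * (u (x k) * g (x k) * h (x k))) +
              s * (∑' k, w k * (u (x k) * f (x k) * h (x k)))))) := by
    have hfe : (fun k => w k * u (x k) * ((f (x k) - p) * (g (x k) - s) * (h (x k) + r)))
        = fun k => (w k * (u (x k) * f (x k) * g (x k) * h (x k)) +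
            (r * (w k * (u (x k) * f (x k) * g (x k))) +
              (p * s * (w k * (u (x k) * h (x k))) + p * s * r * (w k * u (x k))))) -
          (s * r * (w k * (u (x k) * f (x k))) +
            (p * r * (w k * (u (x k) * g (x k))) +
              (p * (w k * (u (x k) * g (x k) * h (x k))) +
                s * (w k * (u (x k) * f (x k) * h (x k)))))) := by
      funext k; ring
    rw [hfe, Summable.tsum_sub hA hB,
      Summable.tsum_add sUFGH ((sUFG.mul_left r).add ((sUH.mul_left (p * s)).add (sU.mul_left (p * s * r)))),
      Summable.tsum_add (sUFG.mul_left r) ((sUH.mul_left (p * s)).add (sU.mul_left (p * s * r))),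
      Summable.tsum_add (sUH.mul_left (p * s)) (sU.mul_left (p * s * r)),
      Summable.tsum_add (sUF.mul_left (s * r)) ((sUG.mul_left (p * r)).add
        ((sUGH.mul_left p).add (sUFH.mul_left s))),
      Summable.tsum_add (sUG.mul_left (p * r)) ((sUGH.mul_left p).add (sUFH.mul_left s)),
      Summable.tsum_add (sUGH.mul_left p) (sUFH.mul_left s),
      tsum_mul_left, tsum_mul_left, tsum_mul_left, tsum_mul_left, tsum_mul_left,
      tsum_mul_left, tsum_mul_left]
  have e2 : (0:ℝ) ≤ ∑' k, w k * u (x k) * ((f (x k) - p) * (g (x k) - s) * (h (x k) + r)) := by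
    apply tsum_nonneg
    intro k
    apply mul_nonneg (mul_nonneg (hw k) (hu k))
    apply mul_nonneg (hsync k)
    have := hh k
    linarith
  rw [e1] at e2
  linarith

lemma master (w₁ w₂ : ℕ → ℝ) (x y : ℕ → ℝ)
    (hw₁ : ∀ k, 0 ≤ w₁ k) (hw₂ : ∀ l, 0 ≤ w₂ l)
    (hx : ∀ k, 0 ≤ x k) (hy : ∀ l, 0 ≤ y l)
    (f g h u v : ℝ → ℝ)
    (hcf : ContinuousOn f (Set.Ici 0)) (hcg : ContinuousOn g (Set.Ici 0))
    (hch : ContinuousOn h (Set.Ici 0)) (hcu : ContinuousOn u (Set.Ici 0))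
    (hcv : ContinuousOn v (Set.Ici 0))
    (hfg : Synchronous f g)
    (hh0 : ∀ s, 0 ≤ s → 0 ≤ h s) (hu0 : ∀ s, 0 ≤ s → 0 ≤ u s) (hv0 : ∀ s, 0 ≤ s → 0 ≤ v s)
    (hs₁ : ∀ φ : ℝ → ℝ, ContinuousOn φ (Set.Ici 0) → Summable (fun k => w₁ k * φ (x k)))
    (hs₂ : ∀ φ : ℝ → ℝ, ContinuousOn φ (Set.Ici 0) → Summable (fun l => w₂ l * φ (y l))) :
    (∑' l, w₂ l * (v (y l) * g (y l) * h (y l))) * (∑' k, w₁ k * (u (x k) * f (x k))) +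
      (∑' l, w₂ l * (v (y l) * f (y l) * h (y l))) * (∑' k, w₁ k * (u (x k) * g (x k))) +
      (∑' l, w₂ l * (v (y l) * f (y l))) * (∑' k, w₁ k * (u (x k) * g (x k) * h (x k))) +
      (∑' l, w₂ l * (v (y l) * g (y l))) * (∑' k, w₁ k * (u (x k) * f (x k) * h (x k)))
    ≤ (∑' l, w₂ l * (v (y l) * f (y l) * g (y l) * h (y l))) * (∑' k, w₁ k * u (x k)) +
      (∑' l, w₂ l * (v (y l) * f (y l) * g (y l))) * (∑' k, w₁ k * (u (x k) * h (x k))) +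
      (∑' l, w₂ l * (v (y l) * h (y l))) * (∑' k, w₁ k * (u (x k) * f (x k) * g (x k))) +
      (∑' l, w₂ l * v (y l)) * (∑' k, w₁ k * (u (x k) * f (x k) * g (x k) * h (x k))) := by
  -- summabilities over k
  have sU : Summable (fun k => w₁ k * u (x k)) := hs₁ u hcu
  have sUF : Summable (fun k => w₁ k * (u (x k) * f (x k))) :=
    hs₁ (fun s => u s * f s) (hcu.mul hcf)
  have sUG : Summable (fun k => w₁ k * (u (x k) * g (x k))) :=
    hs₁ (fun s => u s * g s) (hcu.mul hcg)
  have sUH : Summable (fun k => w₁ k * (u (x k) * h (x k))) :=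
    hs₁ (fun s => u s * h s) (hcu.mul hch)
  have sUFG : Summable (fun k => w₁ k * (u (x k) * f (x k) * g (x k))) :=
    hs₁ (fun s => u s * f s * g s) ((hcu.mul hcf).mul hcg)
  have sUFH : Summable (fun k => w₁ k * (u (x k) * f (x k) * h (x k))) :=
    hs₁ (fun s => u s * f s * h s) ((hcu.mul hcf).mul hch)
  have sUGH : Summable (fun k => w₁ k * (u (x k) * g (x k) * h (x k))) :=
    hs₁ (fun s => u s * g s * h s) ((hcu.mul hcg).mul hch)
  have sUFGH : Summable (fun k => w₁ k * (u (x k) * f (x k) * g (x k) * h (x k))) :=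
    hs₁ (fun s => u s * f s * g s * h s) (((hcu.mul hcf).mul hcg).mul hch)
  -- summabilities over l
  have sV : Summable (fun l => w₂ l * v (y l)) := hs₂ v hcv
  have sVF : Summable (fun l => w₂ l * (v (y l) * f (y l))) :=
    hs₂ (fun s => v s * f s) (hcv.mul hcf)
  have sVG : Summable (fun l => w₂ l * (v (y l) * g (y l))) :=
    hs₂ (fun s => v s * g s) (hcv.mul hcg)
  have sVH : Summable (fun l => w₂ l * (v (y l) * h (y l))) :=
    hs₂ (fun s => v s * h s) (hcv.mul hch)
  have sVFG : Summable (fun l => w₂ l * (v (y l) * f (y l) * g (y l))) :=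
    hs₂ (fun s => v s * f s * g s) ((hcv.mul hcf).mul hcg)
  have sVFH : Summable (fun l => w₂ l * (v (y l) * f (y l) * h (y l))) :=
    hs₂ (fun s => v s * f s * h s) ((hcv.mul hcf).mul hch)
  have sVGH : Summable (fun l => w₂ l * (v (y l) * g (y l) * h (y l))) :=
    hs₂ (fun s => v s * g s * h s) ((hcv.mul hcg).mul hch)
  have sVFGH : Summable (fun l => w₂ l * (v (y l) * f (y l) * g (y l) * h (y l))) :=
    hs₂ (fun s => v s * f s * g s * h s) (((hcv.mul hcf).mul hcg).mul hch)
  -- per-row inequality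
  have point : ∀ l,
      w₂ l * (v (y l) * g (y l) * h (y l)) * (∑' k, w₁ k * (u (x k) * f (x k))) +
        w₂ l * (v (y l) * f (y l) * h (y l)) * (∑' k, w₁ k * (u (x k) * g (x k))) +
        w₂ l * (v (y l) * f (y l)) * (∑' k, w₁ k * (u (x k) * g (x k) * h (x k))) +
        w₂ l * (v (y l) * g (y l)) * (∑' k, w₁ k * (u (x k) * f (x k) * h (x k)))
      ≤ w₂ l * (v (y l) * f (y l) * g (y l) * h (y l)) * (∑' k, w₁ k * u (x k)) +
        w₂ l * (v (y l) * f (y l) * g (y l)) * (∑' k, w₁ k * (u (x k) * h (x k))) +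
        w₂ l * (v (y l) * h (y l)) * (∑' k, w₁ k * (u (x k) * f (x k) * g (x k))) +
        w₂ l * v (y l) * (∑' k, w₁ k * (u (x k) * f (x k) * g (x k) * h (x k))) := by
    intro l
    have key := inner_ineq w₁ x f g h u (f (y l)) (g (y l)) (h (y l)) hw₁
      (fun k => hu0 _ (hx k)) (fun k => hfg _ _ (hx k) (hy l)) (fun k => hh0 _ (hx k))
      (hh0 _ (hy l)) sU sUF sUG sUH sUFG sUFH sUGH sUFGH
    have hWV : 0 ≤ w₂ l * v (y l) := mul_nonneg (hw₂ l) (hv0 _ (hy l))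
    nlinarith [mul_le_mul_of_nonneg_left key hWV]
  -- rewrite products of sums as sums
  rw [← tsum_mul_right, ← tsum_mul_right, ← tsum_mul_right, ← tsum_mul_right,
    ← tsum_mul_right, ← tsum_mul_right, ← tsum_mul_right, ← tsum_mul_right]
  rw [← Summable.tsum_add (sVGH.mul_right _) (sVFH.mul_right _),
    ← Summable.tsum_add ((sVGH.mul_right _).add (sVFH.mul_right _)) (sVF.mul_right _),
    ← Summable.tsum_add (((sVGH.mul_right _).add (sVFH.mul_right _)).add (sVF.mul_right _))
      (sVG.mul_right _),
    ← Summable.tsum_add (sVFGH.mul_right _) (sVFG.mul_right _),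
    ← Summable.tsum_add ((sVFGH.mul_right _).add (sVFG.mul_right _)) (sVH.mul_right _),
    ← Summable.tsum_add (((sVFGH.mul_right _).add (sVFG.mul_right _)).add (sVH.mul_right _))
      (sV.mul_right _)]
  exact Summable.tsum_le_tsum point
    ((((sVGH.mul_right _).add (sVFH.mul_right _)).add (sVF.mul_right _)).add (sVG.mul_right _))
    ((((sVFGH.mul_right _).add (sVFG.mul_right _)).add (sVH.mul_right _)).add (sV.mul_right _))

theorem thm1
    (q₁ q₂ β δ μ ν η ζ : ℝ)
    (hq₁ : 0 < q₁) (hq₁' : q₁ < 1) (hq₂ : 0 < q₂) (hq₂' : q₂ < 1)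
    (hβ : 0 < β) (hδ : 0 < δ) (hμ : 0 < μ) (hν : 0 < ν)
    (hη : -1 < η) (hζ : -1 < ζ)
    (f g h u v : ℝ → ℝ)
    (hcf : ContinuousOn f (Set.Ici 0))
    (hcg : ContinuousOn g (Set.Ici 0))
    (hch : ContinuousOn h (Set.Ici 0))
    (hcu : ContinuousOn u (Set.Ici 0))
    (hcv : ContinuousOn v (Set.Ici 0))
    (hfg : Synchronous f g) (hfh : Synchronous f h) (hgh : Synchronous g h)
    (hh0 : ∀ x : ℝ, 0 ≤ x → 0 ≤ h x)
    (hu0 : ∀ x : ℝ, 0 ≤ x → 0 ≤ u x)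
    (hv0 : ∀ x : ℝ, 0 ≤ x → 0 ≤ v x)
    (t : ℝ) (ht : 0 < t) :
    EK q₂ ζ ν δ (fun s => v s * f s * g s * h s) t * EK q₁ η μ β u t +
      EK q₂ ζ ν δ (fun s => v s * f s * g s) t * EK q₁ η μ β (fun s => u s * h s) t +
      EK q₂ ζ ν δ (fun s => v s * h s) t * EK q₁ η μ β (fun s => u s * f s * g s) t +
      EK q₂ ζ ν δ v t * EK q₁ η μ β (fun s => u s * f s * g s * h s) t
      ≥
      EK q₂ ζ ν δ (fun s => v s * g s * h s) t * EK q₁ η μ β (fun s => u s * f s) t +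
      EK q₂ ζ ν δ (fun s => v s * f s * h s) t * EK q₁ η μ β (fun s => u s * g s) t +
      EK q₂ ζ ν δ (fun s => v s * f s) t * EK q₁ η μ β (fun s => u s * g s * h s) t +
      EK q₂ ζ ν δ (fun s => v s * g s) t * EK q₁ η μ β (fun s => u s * f s * h s) t := by
  have key := master (wgt q₁ η μ) (wgt q₂ ζ ν)
    (fun k => t * q₁ ^ ((k : ℝ) / β)) (fun l => t * q₂ ^ ((l : ℝ) / δ))
    (fun k => (wgt_pos hq₁ hq₁' hμ k).le) (fun l => (wgt_pos hq₂ hq₂' hν l).le)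
    (fun k => by positivity) (fun l => by positivity)
    f g h u v hcf hcg hch hcu hcv hfg hh0 hu0 hv0
    (fun φ hφ => summable_EKterm hq₁ hq₁' hμ hη hβ ht hφ)
    (fun φ hφ => summable_EKterm hq₂ hq₂' hν hζ hδ ht hφ)
  beta_reduce at key
  have hc₁ : 0 < β * (1 - q₁ ^ (1 / β)) * (1 - q₁) ^ (μ - 1) := by
    have h1 : q₁ ^ (1 / β) < 1 := Real.rpow_lt_one hq₁.le hq₁' (by positivity)
    have h2 : (0:ℝ) < (1 - q₁) ^ (μ - 1) := Real.rpow_pos_of_pos (by linarith) _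
    exact mul_pos (mul_pos hβ (by linarith)) h2
  have hc₂ : 0 < δ * (1 - q₂ ^ (1 / δ)) * (1 - q₂) ^ (ν - 1) := by
    have h1 : q₂ ^ (1 / δ) < 1 := Real.rpow_lt_one hq₂.le hq₂' (by positivity)
    have h2 : (0:ℝ) < (1 - q₂) ^ (ν - 1) := Real.rpow_pos_of_pos (by linarith) _
    exact mul_pos (mul_pos hδ (by linarith)) h2
  have hc : 0 ≤ (δ * (1 - q₂ ^ (1 / δ)) * (1 - q₂) ^ (ν - 1)) *
      (β * (1 - q₁ ^ (1 / β)) * (1 - q₁) ^ (μ - 1)) := (mul_pos hc₂ hc₁).le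
  have key2 := mul_le_mul_of_nonneg_left key hc
  rw [ge_iff_le]
  unfold EK
  beta_reduce
  unfold wgt at key2
  linarith [key2]
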